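/- Consider the fuzzy frame F with W = {w, w', w''}, R(w,w') = R(w,w'') = 2/3 and R = 0 on all other pairs, and the KGinv-model on F in which every propositional variable q satisfies v(q,w) = 1, v(q,w') = 1/5 and v(q,w'') = 1/4. Then v(□p,w) = 1/5, but there is no □-free formula χ of L_inv (i.e., built only from variables, ¬ᵢ, ∧, →, ◇) with v(χ,w) ∈ {1/5, 4/5}. -/
import Mathlib



noncomputable def Gimp (x y : ℝ) : ℝ := if x ≤ y then 1 else y

inductive Fml : Type
  | var : ℕ → Fml
  | inv : Fml → Fml
  | and : Fml → Fml → Fml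
  | imp : Fml → Fml → Fml
  | box : Fml → Fml
  | dia : Fml → Fml
  deriving DecidableEq

noncomputable def Fml.eval {W : Type} (R : W → W → ℝ) (v : ℕ → W → ℝ) : Fml → W → ℝ
  | .var p, w => v p w
  | .inv φ, w => 1 - Fml.eval R v φ w
  | .and φ χ, w => min (Fml.eval R v φ w) (Fml.eval R v χ w)
  | .imp φ χ, w => Gimp (Fml.eval R v φ w) (Fml.eval R v χ w)
  | .box φ, w => sInf (Set.range fun w' => Gimp (R w w') (Fml.eval R v φ w'))
  | .dia φ, w => sSup (Set.range fun w' => min (R w w') (Fml.eval R v φ w'))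

def KGinvValid {W : Type} (R : W → W → ℝ) (φ : Fml) : Prop :=
  ∀ v : ℕ → W → ℝ, (∀ p w, v p w ∈ Set.Icc (0:ℝ) 1) → ∀ w : W, Fml.eval R v φ w = 1

noncomputable def R3 : Fin 3 → Fin 3 → ℝ :=
  fun i j => if i = 0 ∧ (j = 1 ∨ j = 2) then 2/3 else 0

noncomputable def v3 : ℕ → Fin 3 → ℝ :=
  fun _ w => if w = 0 then 1 else if w = 1 then 1/5 else 1/4

def BoxFree : Fml → Prop
  | .var _ => True
  | .inv φ => BoxFree φ
  | .and φ χ => BoxFree φ ∧ BoxFree χ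
  | .imp φ χ => BoxFree φ ∧ BoxFree χ
  | .box _ => False
  | .dia φ => BoxFree φ


lemma sup3 (g : Fin 3 → ℝ) : sSup (Set.range g) = max (g 0) (max (g 1) (g 2)) := by
  apply le_antisymm
  · apply csSup_le (Set.range_nonempty g)
    rintro x ⟨i, rfl⟩
    fin_cases i
    · exact le_max_left _ _
    · exact le_trans (le_max_left _ _) (le_max_right _ _)
    · exact le_trans (le_max_right _ _) (le_max_right _ _)
  · have hb : BddAbove (Set.range g) := (Set.finite_range g).bddAbove
    exact max_le (le_csSup hb ⟨0, rfl⟩) (max_le (le_csSup hb ⟨1, rfl⟩) (le_csSup hb ⟨2, rfl⟩))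

lemma inf3 (g : Fin 3 → ℝ) : sInf (Set.range g) = min (g 0) (min (g 1) (g 2)) := by
  apply le_antisymm
  · have hb : BddBelow (Set.range g) := (Set.finite_range g).bddBelow
    exact le_min (csInf_le hb ⟨0, rfl⟩) (le_min (csInf_le hb ⟨1, rfl⟩) (csInf_le hb ⟨2, rfl⟩))
  · apply le_csInf (Set.range_nonempty g)
    rintro x ⟨i, rfl⟩
    fin_cases i
    · exact min_le_left _ _
    · exact le_trans (min_le_right _ _) (min_le_left _ _)
    · exact le_trans (min_le_right _ _) (min_le_right _ _)

def GA (a : ℝ) : Prop := a = 0 ∨ a = 1/4 ∨ a = 1/3 ∨ a = 2/3 ∨ a = 3/4 ∨ a = 1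
def GB (b c : ℝ) : Prop :=
  (b = 0 ∧ c = 0) ∨ (b = 1/5 ∧ c = 1/4) ∨ (b = 4/5 ∧ c = 3/4) ∨ (b = 1 ∧ c = 1)

lemma R3_00 : R3 0 0 = 0 := rfl
lemma R3_01 : R3 0 1 = 2/3 := rfl
lemma R3_02 : R3 0 2 = 2/3 := rfl
lemma R3_1 (j : Fin 3) : R3 1 j = 0 := by fin_cases j <;> rfl
lemma R3_2 (j : Fin 3) : R3 2 j = 0 := by fin_cases j <;> rfl
lemma v3_0 (p : ℕ) : v3 p 0 = 1 := rfl
lemma v3_1 (p : ℕ) : v3 p 1 = 1/5 := rfl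
lemma v3_2 (p : ℕ) : v3 p 2 = 1/4 := rfl

lemma main (χ : Fml) (h : BoxFree χ) :
    GA (Fml.eval R3 v3 χ 0) ∧ GB (Fml.eval R3 v3 χ 1) (Fml.eval R3 v3 χ 2) := by
  induction χ with
  | var p => exact ⟨by rw [Fml.eval, v3_0]; norm_num [GA], by rw [Fml.eval, Fml.eval, v3_1, v3_2]; norm_num [GB]⟩
  | inv φ ih =>
    obtain ⟨hA, hB⟩ := ih h
    simp only [Fml.eval]
    constructor
    · rcases hA with h'|h'|h'|h'|h'|h' <;> rw [h'] <;> norm_num [GA]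
    · rcases hB with ⟨h1,h2⟩|⟨h1,h2⟩|⟨h1,h2⟩|⟨h1,h2⟩ <;> rw [h1, h2] <;> norm_num [GB]
  | and φ ψ ihφ ihψ =>
    obtain ⟨hA, hB⟩ := ihφ h.1
    obtain ⟨hA', hB'⟩ := ihψ h.2
    simp only [Fml.eval]
    constructor
    · rcases min_choice (Fml.eval R3 v3 φ 0) (Fml.eval R3 v3 ψ 0) with h' | h' <;>
        rw [h'] <;> assumption
    · rcases hB with ⟨h1,h2⟩|⟨h1,h2⟩|⟨h1,h2⟩|⟨h1,h2⟩ <;>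
        rcases hB' with ⟨h3,h4⟩|⟨h3,h4⟩|⟨h3,h4⟩|⟨h3,h4⟩ <;>
        rw [h1, h2, h3, h4] <;> norm_num [GB, min_def]
  | imp φ ψ ihφ ihψ =>
    obtain ⟨hA, hB⟩ := ihφ h.1
    obtain ⟨hA', hB'⟩ := ihψ h.2
    simp only [Fml.eval]
    constructor
    · unfold Gimp
      split
      · exact Or.inr (Or.inr (Or.inr (Or.inr (Or.inr rfl))))
      · exact hA'
    · rcases hB with ⟨h1,h2⟩|⟨h1,h2⟩|⟨h1,h2⟩|⟨h1,h2⟩ <;>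
        rcases hB' with ⟨h3,h4⟩|⟨h3,h4⟩|⟨h3,h4⟩|⟨h3,h4⟩ <;>
        rw [h1, h2, h3, h4] <;> norm_num [GB, Gimp]
  | box φ ih => exact absurd h id
  | dia φ ih =>
    obtain ⟨hA, hB⟩ := ih h
    have e0 : (0:ℝ) ≤ Fml.eval R3 v3 φ 0 := by
      rcases hA with h'|h'|h'|h'|h'|h' <;> rw [h'] <;> norm_num
    have e1 : (0:ℝ) ≤ Fml.eval R3 v3 φ 1 := by
      rcases hB with ⟨h1,_⟩|⟨h1,_⟩|⟨h1,_⟩|⟨h1,_⟩ <;> rw [h1] <;> norm_num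
    have e2 : (0:ℝ) ≤ Fml.eval R3 v3 φ 2 := by
      rcases hB with ⟨_,h2⟩|⟨_,h2⟩|⟨_,h2⟩|⟨_,h2⟩ <;> rw [h2] <;> norm_num
    simp only [Fml.eval]
    constructor
    · rw [sup3, R3_00, R3_01, R3_02, min_eq_left e0]
      rcases hB with ⟨h1,h2⟩|⟨h1,h2⟩|⟨h1,h2⟩|⟨h1,h2⟩ <;>
        rw [h1, h2] <;> norm_num [GA, min_def, max_def]
    · have t1 : sSup (Set.range fun w' => min (R3 1 w') (Fml.eval R3 v3 φ w')) = 0 := by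
        rw [sup3, R3_1, R3_1, R3_1, min_eq_left e0, min_eq_left e1, min_eq_left e2]
        norm_num
      have t2 : sSup (Set.range fun w' => min (R3 2 w') (Fml.eval R3 v3 φ w')) = 0 := by
        rw [sup3, R3_2, R3_2, R3_2, min_eq_left e0, min_eq_left e1, min_eq_left e2]
        norm_num
      rw [t1, t2]
      exact Or.inl ⟨rfl, rfl⟩

theorem statement1 :
    Fml.eval R3 v3 (.box (.var 0)) 0 = 1/5 ∧
    ¬ ∃ χ : Fml, BoxFree χ ∧
      (Fml.eval R3 v3 χ 0 = 1/5 ∨ Fml.eval R3 v3 χ 0 = 4/5) := by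
  constructor
  · simp only [Fml.eval]
    rw [inf3, R3_00, R3_01, R3_02]
    simp only [Fml.eval, v3_0, v3_1, v3_2]
    norm_num [Gimp, min_def]
  · rintro ⟨χ, hbf, hval⟩
    obtain ⟨hA, -⟩ := main χ hbf
    rcases hval with h | h <;> rw [h] at hA <;>
      rcases hA with h'|h'|h'|h'|h'|h' <;> norm_num at h'
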